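/- Let A be a commutative algebra over a field of characteristic not 2 with idempotents (axes) a, b, equipped with a Frobenius form with (a,a)=(b,b)=1, and suppose the 2-generated Jordan-type-1/2 identities a(ab) = (1/2)(αa + ab) and b(ab) = (1/2)(αb + ab) and (ab)(ab) = (α/4)(a + b + 2ab) hold, where α = (a,b). Then the element d = (2ab − αa − b)/(α−1) (assuming α ≠ 1) satisfies ad = 0 and d² = d. -/

import Mathlib

/-- In a 2-generated Jordan-type-1/2 situation with `α ≠ 1`, the element
`d = (2ab − αa − b)/(α−1)` satisfies `ad = 0` and `d² = d`. -/
theorem twin_axis_idempotent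
    {F : Type*} [Field F] (hchar : (2 : F) ≠ 0)
    {A : Type*} [NonUnitalNonAssocCommRing A] [Module F A]
    [SMulCommClass F A A] [IsScalarTower F A A]
    (a b : A) (ha : a * a = a) (hb : b * b = b) (α : F) (hα : α ≠ 1)
    (h1 : a * (a * b) = (2 : F)⁻¹ • (α • a + a * b))
    (h2 : b * (a * b) = (2 : F)⁻¹ • (α • b + a * b))
    (h3 : (a * b) * (a * b) = (α / 4) • (a + b + (2 : F) • (a * b))) :
    let d : A := (α - 1)⁻¹ • ((2 : F) • (a * b) - α • a - b)
    a * d = 0 ∧ d * d = d := by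
  intro d
  have h4 : (4 : F) ≠ 0 := by
    have : (4 : F) = 2 * 2 := by norm_num
    rw [this]; exact mul_ne_zero hchar hchar
  have hα1 : α - 1 ≠ 0 := sub_ne_zero.mpr hα
  set e : A := (2 : F) • (a * b) - α • a - b with he
  have key1 : a * e = 0 := by
    rw [he, mul_sub, mul_sub, mul_smul_comm, mul_smul_comm, h1, ha]
    match_scalars <;> field_simp <;> ring
  have key2 : e * e = (α - 1) • e := by
    rw [he]
    have expand : ((2 : F) • (a * b) - α • a - b) * ((2 : F) • (a * b) - α • a - b)
        = (4 : F) • ((a * b) * (a * b)) - ((4 : F) * α) • (a * (a * b))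
          - (4 : F) • (b * (a * b)) + (α * α) • (a * a)
          + ((2 : F) * α) • (a * b) + b * b := by
      simp only [sub_mul, mul_sub, smul_mul_assoc, mul_smul_comm, smul_smul,
        mul_comm (a * b) a, mul_comm (a * b) b, mul_comm b a]
      module
    rw [expand, h1, h2, h3, ha, hb]
    match_scalars <;> field_simp <;> ring
  refine ⟨?_, ?_⟩
  · show a * ((α - 1)⁻¹ • e) = 0
    rw [mul_smul_comm, key1, smul_zero]
  · show ((α - 1)⁻¹ • e) * ((α - 1)⁻¹ • e) = (α - 1)⁻¹ • e
    rw [smul_mul_assoc, mul_smul_comm, key2, smul_smul, smul_smul]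
    congr 1
    field_simp
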